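/- Let Λ and K be 3×3 real diagonal matrices with positive diagonal entries; write λ_min(Λ), λ_max(Λ) for the minimum and maximum diagonal entries of Λ and λ_min(K) for the minimum diagonal entry of K. Let Δ : [0, ∞) → ℝ³ be continuous with Euclidean norm ‖Δ(t)‖ ≤ δ_E for all t ≥ 0, and define δ_z = (λ_min(Λ) + λ_max(Λ))·δ_E/(λ_min(Λ)·λ_min(K)). Let l > 0, and for each component index ν ∈ {1,2,3} let ρ_{ν,0} > 0, ρ_{ν,∞} > 0, e_ν(0) ∈ ℝ, b_ν ∈ ℝ, and c_ν > 0 satisfy δ_z < min{ρ_{ν,∞}, ρ_{ν,0} − |e_ν(0)|} and c_ν > |b_ν|/(ρ_{ν,0} − δ_z − |e_ν(0)|). Define ρ_ν(t) = (ρ_{ν,0} − ρ_{ν,∞})·exp(−l·t) + ρ_{ν,∞} and α_ν(t) = (b_ν/c_ν)·(1 − exp(−c_ν·t))·exp(−l·t) + e_ν(0)·exp(−l·t). Let e : [0, ∞) → ℝ³ be continuous with component ν at time 0 equal to e_ν(0), let z(t) = e(t) − α(t), let z_∫(t) = ∫₀ᵗ z(τ) dτ, and let s(t) = z(t) + Λ·z_∫(t).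 Assume s is differentiable with s'(t) = −K·s(t) + Δ(t) for all t ≥ 0. Then for each ν ∈ {1,2,3} and all t ≥ 0, |e_ν(t)| < ρ_ν(t). -/

import Mathlib

open Set intervalIntegral MeasureTheory

lemma coord_abs_le_norm {n : Type*} [Fintype n] (x : EuclideanSpace ℝ n) (ν : n) :
    |x ν| ≤ ‖x‖ := by
  rw [EuclideanSpace.norm_eq]
  have h1 : |x ν| = Real.sqrt (‖x ν‖ ^ 2) := by
    rw [Real.sqrt_sq_eq_abs, abs_norm, Real.norm_eq_abs]
  rw [h1]
  apply Real.sqrt_le_sqrt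
  exact Finset.single_le_sum (f := fun i => ‖x i‖ ^ 2) (fun i _ => by positivity)
    (Finset.mem_univ ν)

/-- Scalar dissipative ODE bound: if `f(0)=0`, `f' = -k f + g` with `|g| ≤ C`, then
`|f t| ≤ C / k` for `t ≥ 0`. -/
lemma ode_abs_le (k C : ℝ) (hk : 0 < k) (f g : ℝ → ℝ)
    (hfc : ContinuousOn f (Set.Ici 0)) (hf0 : f 0 = 0)
    (hfd : ∀ τ, 0 < τ → HasDerivAt f (-k * f τ + g τ) τ)
    (hgc : ContinuousOn g (Set.Ici 0))
    (hgb : ∀ τ, 0 ≤ τ → |g τ| ≤ C) :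
    ∀ t, 0 ≤ t → |f t| ≤ C / k := by
  have hC : 0 ≤ C := le_trans (abs_nonneg _) (hgb 0 le_rfl)
  intro t ht
  rcases eq_or_lt_of_le ht with h0 | h0
  · rw [← h0]; simpa [hf0] using div_nonneg hC hk.le
  set u : ℝ → ℝ := fun τ => Real.exp (k * τ) * f τ with hu
  set u' : ℝ → ℝ := fun τ => Real.exp (k * τ) * g τ with hu'
  have hexpc : Continuous fun τ : ℝ => Real.exp (k * τ) := by continuity
  have hud : ∀ τ ∈ Set.Ioo 0 t, HasDerivWithinAt u (u' τ) (Set.Ioi τ) τ := by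
    intro τ hτ
    have h1 : HasDerivAt (fun τ : ℝ => Real.exp (k * τ)) (Real.exp (k * τ) * k) τ := by
      simpa using (HasDerivAt.exp ((hasDerivAt_id τ).const_mul k))
    have h2 := h1.mul (hfd τ hτ.1)
    have h3 : Real.exp (k * τ) * k * f τ + Real.exp (k * τ) * (-k * f τ + g τ) = u' τ := by
      simp only [hu']; ring
    rw [h3] at h2
    exact h2.hasDerivWithinAt
  have hcont_u : ContinuousOn u (Set.Icc 0 t) :=
    (hexpc.continuousOn.mul (hfc.mono Icc_subset_Ici_self))
  have hIcc : Set.uIcc (0:ℝ) t = Set.Icc 0 t := Set.uIcc_of_le ht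
  have hint : IntervalIntegrable u' volume 0 t := by
    apply ContinuousOn.intervalIntegrable
    rw [hIcc]
    exact hexpc.continuousOn.mul (hgc.mono Icc_subset_Ici_self)
  have key := integral_eq_sub_of_hasDeriv_right_of_le ht hcont_u hud hint
  have hu0 : u 0 = 0 := by simp [hu, hf0]
  have hintC : IntervalIntegrable (fun τ => C * Real.exp (k * τ)) volume 0 t := by
    apply ContinuousOn.intervalIntegrable
    exact (continuous_const.mul hexpc).continuousOn
  have hb : |u t| ≤ ∫ τ in (0:ℝ)..t, C * Real.exp (k * τ) := by
    have hut : u t = ∫ τ in (0:ℝ)..t, u' τ := by rw [key, hu0, sub_zero]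
    rw [hut]
    calc |∫ τ in (0:ℝ)..t, u' τ| ≤ ∫ τ in (0:ℝ)..t, |u' τ| :=
          intervalIntegral.abs_integral_le_integral_abs ht
      _ ≤ ∫ τ in (0:ℝ)..t, C * Real.exp (k * τ) := by
          apply intervalIntegral.integral_mono_on ht hint.abs hintC
          intro x hx
          have : |u' x| = Real.exp (k * x) * |g x| := by
            rw [abs_mul, abs_of_pos (Real.exp_pos _)]
          rw [this, mul_comm C]
          exact mul_le_mul_of_nonneg_left (hgb x hx.1) (Real.exp_pos _).le
  have hcomp : ∫ τ in (0:ℝ)..t, C * Real.exp (k * τ) = C * ((Real.exp (k * t) - 1) / k) := by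
    rw [intervalIntegral.integral_const_mul]
    have : ∫ τ in (0:ℝ)..t, Real.exp (k * τ) = k⁻¹ • ∫ x in (k*0)..(k*t), Real.exp x := by
      rw [← intervalIntegral.integral_comp_mul_left (fun x => Real.exp x) hk.ne']
    rw [this, integral_exp]
    rw [smul_eq_mul]
    rw [mul_zero, Real.exp_zero]
    ring
  rw [hcomp] at hb
  have hET : 0 < Real.exp (k * t) := Real.exp_pos _
  have hut : |u t| = Real.exp (k * t) * |f t| := by
    rw [hu, abs_mul, abs_of_pos hET]
  rw [hut] at hb
  have h2 : Real.exp (k * t) * |f t| ≤ C / k * Real.exp (k * t) := by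
    calc Real.exp (k * t) * |f t| ≤ C * ((Real.exp (k * t) - 1) / k) := hb
      _ = C * (Real.exp (k * t) - 1) / k := by ring
      _ ≤ C * Real.exp (k * t) / k := by gcongr; nlinarith
      _ = C / k * Real.exp (k * t) := by ring
  rw [mul_comm (C / k)] at h2
  exact le_of_mul_le_mul_left h2 hET

set_option maxHeartbeats 1000000 in
/-- Theorem 1 of the paper, main result.
Under the closed-loop sliding-mode dynamics `s' = -K·s + Δ` with bounded
disturbance `‖Δ‖ ≤ δ_E`, positive diagonal matrices `Λ` and `K`, and envelope /
preset-trajectory parameters satisfying the conditions of Lemma 1 with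
`δ_z = (λ_min(Λ) + λ_max(Λ))·δ_E/(λ_min(Λ)·λ_min(K))`, each component of the
tracking error stays strictly inside the performance envelope:
`|e_ν(t)| < ρ_ν(t)` for all `t ≥ 0`. -/
theorem main_theorem_tracking_error_in_envelope
    (Λ K : Matrix (Fin 3) (Fin 3) ℝ)
    (hΛdiag : Λ.IsDiag) (hKdiag : K.IsDiag)
    (hΛpos : ∀ i, 0 < Λ i i) (hKpos : ∀ i, 0 < K i i)
    (lamMinΛ lamMaxΛ lamMinK : ℝ)
    (hminΛ : lamMinΛ = Finset.univ.inf' Finset.univ_nonempty (fun i => Λ i i))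
    (hmaxΛ : lamMaxΛ = Finset.univ.sup' Finset.univ_nonempty (fun i => Λ i i))
    (hminK : lamMinK = Finset.univ.inf' Finset.univ_nonempty (fun i => K i i))
    (δE : ℝ)
    (Δ : ℝ → EuclideanSpace ℝ (Fin 3))
    (hΔcont : ContinuousOn Δ (Set.Ici 0))
    (hΔbound : ∀ t, 0 ≤ t → ‖Δ t‖ ≤ δE)
    (δz : ℝ)
    (hδz : δz = (lamMinΛ + lamMaxΛ) * δE / (lamMinΛ * lamMinK))
    (l : ℝ) (hl : 0 < l)
    (ρ₀ ρinf e₀ b c : Fin 3 → ℝ)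
    (hρ₀ : ∀ ν, 0 < ρ₀ ν) (hρinf : ∀ ν, 0 < ρinf ν) (hcpos : ∀ ν, 0 < c ν)
    (hδzlt : ∀ ν, δz < min (ρinf ν) (ρ₀ ν - |e₀ ν|))
    (hc : ∀ ν, c ν > |b ν| / (ρ₀ ν - δz - |e₀ ν|))
    (ρ α : Fin 3 → ℝ → ℝ)
    (hρ : ∀ ν t, ρ ν t = (ρ₀ ν - ρinf ν) * Real.exp (-l * t) + ρinf ν)
    (hα : ∀ ν t, α ν t =
      (b ν / c ν) * (1 - Real.exp (-(c ν) * t)) * Real.exp (-l * t)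
        + e₀ ν * Real.exp (-l * t))
    (e z zint s : ℝ → EuclideanSpace ℝ (Fin 3))
    (hecont : ContinuousOn e (Set.Ici 0))
    (he0 : ∀ ν, e 0 ν = e₀ ν)
    (hz : ∀ t ν, z t ν = e t ν - α ν t)
    (hzint : ∀ t, zint t = ∫ τ in (0:ℝ)..t, z τ)
    (hs : ∀ t, s t = z t + (show EuclideanSpace ℝ (Fin 3) from WithLp.toLp 2 (Λ.mulVec (zint t))))
    (hode : ∀ t, 0 ≤ t →
      HasDerivAt s (-(show EuclideanSpace ℝ (Fin 3) from WithLp.toLp 2 (K.mulVec (s t))) + Δ t) t) :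
    ∀ ν : Fin 3, ∀ t, 0 ≤ t → |e t ν| < ρ ν t := by
  classical
  -- basic positivity facts
  have hδE0 : 0 ≤ δE := le_trans (norm_nonneg _) (hΔbound 0 le_rfl)
  have hminKpos : 0 < lamMinK := by
    rw [hminK]; exact (Finset.lt_inf'_iff _).2 fun i _ => hKpos i
  have hminΛpos : 0 < lamMinΛ := by
    rw [hminΛ]; exact (Finset.lt_inf'_iff _).2 fun i _ => hΛpos i
  have hminKle : ∀ i, lamMinK ≤ K i i := fun i => by
    rw [hminK]; exact Finset.inf'_le _ (Finset.mem_univ i)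
  have hminΛle : ∀ i, lamMinΛ ≤ Λ i i := fun i => by
    rw [hminΛ]; exact Finset.inf'_le _ (Finset.mem_univ i)
  have hmaxΛge : ∀ i, Λ i i ≤ lamMaxΛ := fun i => by
    rw [hmaxΛ]; exact Finset.le_sup' (fun i => Λ i i) (Finset.mem_univ i)
  -- diagonal mulVec
  have hmulvec : ∀ (M : Matrix (Fin 3) (Fin 3) ℝ), M.IsDiag →
      ∀ (v : EuclideanSpace ℝ (Fin 3)) i, M.mulVec v i = M i i * v i := by
    intro M hM v i
    simp only [Matrix.mulVec, dotProduct]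
    rw [Finset.sum_eq_single i]
    · intro j _ hj; rw [hM (Ne.symm hj), zero_mul]
    · intro h; exact absurd (Finset.mem_univ i) h
  -- continuity facts
  have hαcont : ∀ i, Continuous fun τ => α i τ := by
    intro i
    have h : (fun τ => α i τ) = fun τ =>
        (b i / c i) * (1 - Real.exp (-(c i) * τ)) * Real.exp (-l * τ)
          + e₀ i * Real.exp (-l * τ) := funext (hα i)
    rw [h]; fun_prop
  have hecomp : ∀ i, ContinuousOn (fun τ => e τ i) (Set.Ici 0) := fun i =>
    ((continuous_apply i).comp (PiLp.continuous_ofLp 2 _)).comp_continuousOn hecont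
  have hzcomp : ∀ i, ContinuousOn (fun τ => z τ i) (Set.Ici 0) := by
    intro i
    have h : (fun τ => z τ i) = fun τ => e τ i - α i τ := funext fun τ => hz τ i
    rw [h]; exact (hecomp i).sub (hαcont i).continuousOn
  have hzcont : ContinuousOn z (Set.Ici 0) := by
    have h1 : ContinuousOn (fun τ => ((fun i => z τ i) : Fin 3 → ℝ)) (Set.Ici 0) :=
      continuousOn_pi.2 fun i => hzcomp i
    exact (PiLp.continuous_toLp 2 _).comp_continuousOn h1
  have hscont : ContinuousOn s (Set.Ici 0) :=
    fun x hx => ((hode x hx).continuousAt).continuousWithinAt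
  have hscomp : ∀ i, ContinuousOn (fun τ => s τ i) (Set.Ici 0) := fun i =>
    ((continuous_apply i).comp (PiLp.continuous_ofLp 2 _)).comp_continuousOn hscont
  have hΔcomp : ∀ i, ContinuousOn (fun τ => Δ τ i) (Set.Ici 0) := fun i =>
    ((continuous_apply i).comp (PiLp.continuous_ofLp 2 _)).comp_continuousOn hΔcont
  -- initial values
  have hz0 : z 0 = 0 := by
    ext i
    rw [hz 0 i, he0 i, hα i 0]
    simp
  have hzint0 : zint 0 = 0 := by rw [hzint 0, intervalIntegral.integral_same]
  have hscomp_eq : ∀ τ i, s τ i = z τ i + Λ i i * zint τ i := by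
    intro τ i
    have h1 : s τ i = z τ i + Λ.mulVec (zint τ) i := by rw [hs τ]; rfl
    rw [h1, hmulvec Λ hΛdiag]
  have hs0 : ∀ i, s 0 i = 0 := by
    intro i
    have h1 : z 0 i = 0 := by rw [hz0]; rfl
    have h2 : zint 0 i = 0 := by rw [hzint0]; rfl
    rw [hscomp_eq 0 i, h1, h2]
    ring
  -- Step 1 : bound on s
  set S : ℝ := δE / lamMinK with hS
  have hSnn : 0 ≤ S := div_nonneg hδE0 hminKpos.le
  have hsbound : ∀ i t, 0 ≤ t → |s t i| ≤ S := by
    intro i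
    have hderiv : ∀ τ, 0 < τ → HasDerivAt (fun τ => s τ i) (-(K i i) * s τ i + Δ τ i) τ := by
      intro τ hτ
      have h2 := ((EuclideanSpace.proj i :
        EuclideanSpace ℝ (Fin 3) →L[ℝ] ℝ)).hasFDerivAt.comp_hasDerivAt τ (hode τ hτ.le)
      simp only [EuclideanSpace.proj, PiLp.proj_apply] at h2
      refine h2.congr_deriv ?_
      have h3 : (-(show EuclideanSpace ℝ (Fin 3) from WithLp.toLp 2 (K.mulVec (s τ))) + Δ τ) i
          = -(K.mulVec (s τ) i) + Δ τ i := rfl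
      refine h3.trans ?_
      rw [hmulvec K hKdiag]
      ring
    have hsi0 : s 0 i = 0 := hs0 i
    have h1 := ode_abs_le (K i i) δE (hKpos i) (fun τ => s τ i) (fun τ => Δ τ i)
      (hscomp i) hsi0 hderiv (hΔcomp i)
      (fun τ hτ => le_trans (coord_abs_le_norm (Δ τ) i) (hΔbound τ hτ))
    intro t ht
    refine le_trans (h1 t ht) ?_
    rw [hS]
    gcongr
    exact hminKle i
  -- fix component and time
  intro ν t ht
  have hkΛpos : 0 < Λ ν ν := hΛpos ν
  have hsν : ∀ τ, s τ ν = z τ ν + Λ ν ν * zint τ ν := fun τ => hscomp_eq τ ν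
  -- Step 2 : bound on zint component
  set F : ℝ → ℝ := fun τ => zint τ ν with hF
  have hF0 : F 0 = 0 := by simp only [hF]; rw [hzint0]; rfl
  have hFcont : ContinuousOn F (Set.Ici 0) := by
    have heqF : F = fun τ => (s τ ν - z τ ν) / Λ ν ν := by
      funext τ; rw [hsν τ]; field_simp; simp only [hF]; ring
    rw [heqF]
    exact ((hscomp ν).sub (hzcomp ν)).div_const _
  set G : ℝ → ℝ := fun x => ∫ τ in (0:ℝ)..x, z τ ν with hG
  have hFG : ∀ x, 0 ≤ x → F x = G x := by
    intro x hx
    have hzi : IntervalIntegrable z volume 0 x :=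
      (hzcont.mono (by rw [Set.uIcc_of_le hx]; exact Set.Icc_subset_Ici_self)).intervalIntegrable
    have h1 := (EuclideanSpace.proj ν :
      EuclideanSpace ℝ (Fin 3) →L[ℝ] ℝ).intervalIntegral_comp_comm hzi
    simp only [EuclideanSpace.proj, PiLp.proj_apply] at h1
    calc F x = ((∫ τ in (0:ℝ)..x, z τ) : EuclideanSpace ℝ (Fin 3)) ν := by
          simp only [hF]; rw [hzint x]
      _ = G x := by rw [← h1]
  have hFd : ∀ τ, 0 < τ → HasDerivAt F (-(Λ ν ν) * F τ + s τ ν) τ := by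
    intro τ hτ
    have hGd : HasDerivAt G (z τ ν) τ := by
      apply intervalIntegral.integral_hasDerivAt_right
      · exact ((hzcomp ν).mono
          (by rw [Set.uIcc_of_le hτ.le]; exact Set.Icc_subset_Ici_self)).intervalIntegrable
      · exact ContinuousOn.stronglyMeasurableAtFilter isOpen_Ioi
          ((hzcomp ν).mono (Set.Ioi_subset_Ici le_rfl)) τ hτ
      · exact (hzcomp ν).continuousAt (Ici_mem_nhds hτ)
    have h1 : HasDerivAt F (z τ ν) τ := by
      apply hGd.congr_of_eventuallyEq
      filter_upwards [Ioi_mem_nhds hτ] with x hx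
      exact hFG x (le_of_lt hx)
    have h2 : z τ ν = -(Λ ν ν) * F τ + s τ ν := by
      have := hsν τ; simp only [hF]; linarith
    rwa [h2] at h1
  have hFbound := ode_abs_le (Λ ν ν) S hkΛpos F (fun τ => s τ ν) hFcont hF0 hFd (hscomp ν)
      (fun τ hτ => hsbound ν τ hτ)
  -- Step 3 : bound on z component
  have hzb : |z t ν| ≤ 2 * S := by
    have h1 : z t ν = s t ν - Λ ν ν * F t := by
      have := hsν t; simp only [hF]; linarith
    rw [h1]
    have h2 := hsbound ν t ht
    have h3 := hFbound t ht
    have h4 : |Λ ν ν * F t| ≤ S := by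
      rw [abs_mul, abs_of_pos hkΛpos]
      calc Λ ν ν * |F t| ≤ Λ ν ν * (S / Λ ν ν) :=
            mul_le_mul_of_nonneg_left h3 hkΛpos.le
        _ = S := by field_simp
    have h5 := abs_add_le (s t ν) (-(Λ ν ν * F t))
    rw [abs_neg] at h5
    have h6 : s t ν - Λ ν ν * F t = s t ν + -(Λ ν ν * F t) := by ring
    rw [h6]
    linarith
  -- Step 4 : 2S ≤ δz
  have h2Sδz : 2 * S ≤ δz := by
    have hlm : lamMinΛ ≤ lamMaxΛ := le_trans (hminΛle ν) (hmaxΛge ν)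
    have hSS : 2 * S = 2 * δE / lamMinK := by rw [hS]; ring
    rw [hSS, hδz, div_le_div_iff₀ hminKpos (by positivity)]
    nlinarith [mul_nonneg (mul_nonneg hδE0 hminKpos.le) (sub_nonneg.2 hlm)]
  -- Step 5 : strict bound on α
  have hδzρ0 : δz < ρ₀ ν - |e₀ ν| := lt_of_lt_of_le (hδzlt ν) (min_le_right _ _)
  have hδzρinf : δz < ρinf ν := lt_of_lt_of_le (hδzlt ν) (min_le_left _ _)
  have hD : 0 < ρ₀ ν - δz - |e₀ ν| := by linarith
  have hbc : |b ν| / c ν < ρ₀ ν - δz - |e₀ ν| := by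
    rw [div_lt_iff₀ (hcpos ν)]
    have h1 := (div_lt_iff₀ hD).mp (hc ν)
    nlinarith
  set E2 := Real.exp (-l * t) with hE2
  have hE2pos : 0 < E2 := Real.exp_pos _
  have hE2le : E2 ≤ 1 := Real.exp_le_one_iff.2 (by nlinarith)
  have hαb : |α ν t| < (ρ₀ ν - δz) * E2 := by
    rw [hα ν t, ← hE2]
    set E1 := Real.exp (-(c ν) * t) with hE1
    have hE1pos : 0 < E1 := Real.exp_pos _
    have hE1le : E1 ≤ 1 := Real.exp_le_one_iff.2 (by nlinarith [hcpos ν])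
    have h1 : |(b ν / c ν) * (1 - E1) * E2 + e₀ ν * E2| ≤
        (|b ν| / c ν * (1 - E1) + |e₀ ν|) * E2 := by
      calc |(b ν / c ν) * (1 - E1) * E2 + e₀ ν * E2|
          ≤ |(b ν / c ν) * (1 - E1) * E2| + |e₀ ν * E2| := abs_add_le _ _
        _ = (|b ν| / c ν * (1 - E1) + |e₀ ν|) * E2 := by
            rw [abs_mul, abs_mul, abs_mul, abs_div,
              abs_of_pos hE2pos, abs_of_pos (hcpos ν),
              abs_of_nonneg (by linarith : (0:ℝ) ≤ 1 - E1)]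
            ring
    refine lt_of_le_of_lt h1 ?_
    have h3 : |b ν| / c ν * (1 - E1) ≤ |b ν| / c ν := by
      nlinarith [div_nonneg (abs_nonneg (b ν)) (hcpos ν).le]
    have h2 : |b ν| / c ν * (1 - E1) + |e₀ ν| < ρ₀ ν - δz := by linarith
    exact mul_lt_mul_of_pos_right h2 hE2pos
  -- Step 6 : envelope comparison
  have hρt : (ρ₀ ν - δz) * E2 + δz ≤ ρ ν t := by
    rw [hρ ν t, ← hE2]
    nlinarith [mul_le_mul_of_nonneg_left hE2le (by linarith : (0:ℝ) ≤ ρinf ν - δz)]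
  -- conclusion
  have hfinal : |e t ν| ≤ |z t ν| + |α ν t| := by
    have h1 : e t ν = z t ν + α ν t := by rw [hz t ν]; ring
    rw [h1]; exact abs_add_le _ _
  calc |e t ν| ≤ |z t ν| + |α ν t| := hfinal
    _ ≤ 2 * S + |α ν t| := by linarith
    _ ≤ δz + |α ν t| := by linarith
    _ < δz + (ρ₀ ν - δz) * E2 := by linarith
    _ ≤ ρ ν t := by linarith
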